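/- (Volume-preserving variations.) Let D ⊆ ℝ^d be a bounded open set, Ω ⊆ D an open set, and η, ξ ∈ C_c^∞(D;ℝ^d) smooth vector fields compactly supported in D with supp η ∩ supp ξ = ∅ and ∫_Ω div ξ(x) dx ≠ 0. Then there exist t₀ > 0 and a C^∞ function f : (−t₀,t₀) → ℝ with f(0) = 0 such that the map Φ_t(x) := x + tη(x) + f(t)ξ(x) preserves the volume of Ω for every t ∈ (−t₀,t₀), that is |Φ_t(Ω)| = |Ω| for all |t| < t₀; moreover f'(0) · ∫_Ω div ξ(x) dx = − ∫_Ω div η(x) dx. -/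

import Mathlib

open MeasureTheory Polynomial

/-- The divergence of a vector field on `ℝ^d`: the trace of its Jacobian. -/
noncomputable def vdiv {d : ℕ} (η : EuclideanSpace ℝ (Fin d) → EuclideanSpace ℝ (Fin d))
    (x : EuclideanSpace ℝ (Fin d)) : ℝ :=
  LinearMap.trace ℝ (EuclideanSpace ℝ (Fin d)) (fderiv ℝ η x).toLinearMap

noncomputable section AuxVP

variable {d : ℕ}

local notation "E" => EuclideanSpace ℝ (Fin d)

/-- basis of Euclidean space -/
noncomputable def bE (d : ℕ) : Module.Basis (Fin d) ℝ (EuclideanSpace ℝ (Fin d)) :=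
  (EuclideanSpace.basisFun (Fin d) ℝ).toBasis

noncomputable def matOf (η : EuclideanSpace ℝ (Fin d) → EuclideanSpace ℝ (Fin d)) (x : EuclideanSpace ℝ (Fin d)) :
    Matrix (Fin d) (Fin d) ℝ :=
  LinearMap.toMatrix (bE d) (bE d) (fderiv ℝ η x).toLinearMap

noncomputable def polyOf (η : EuclideanSpace ℝ (Fin d) → EuclideanSpace ℝ (Fin d)) (x : EuclideanSpace ℝ (Fin d)) :
    Polynomial ℝ :=
  Matrix.det (1 + (X : ℝ[X]) • (matOf η x).map C)

lemma eval_polyOf (η : E → E) (x : E) (t : ℝ) :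
    (polyOf η x).eval t = Matrix.det (1 + t • matOf η x) := by
  rw [polyOf, ← coe_evalRingHom, RingHom.map_det]
  congr 1
  ext i j
  simp [Matrix.one_apply, apply_ite]
  exact mul_comm _ _

lemma natDegree_polyOf_le (η : E → E) (x : E) : (polyOf η x).natDegree ≤ d := by
  rw [polyOf, Matrix.det_apply']
  apply natDegree_sum_le_of_forall_le
  intro σ _
  refine (natDegree_mul_le).trans ?_
  rw [show (Equiv.Perm.sign σ : ℝ[X]).natDegree = 0 from natDegree_intCast _, zero_add]
  refine (natDegree_prod_le _ _).trans ?_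
  have h : ∀ i : Fin d, ((1 + (X : ℝ[X]) • (matOf η x).map C) (σ i) i).natDegree ≤ 1 := by
    intro i
    simp only [Matrix.add_apply, Matrix.smul_apply, Matrix.map_apply, smul_eq_mul]
    refine (natDegree_add_le _ _).trans ?_
    refine max_le ?_ ?_
    · refine le_trans ?_ (Nat.zero_le 1)
      rcases eq_or_ne (σ i) i with h | h <;> simp [Matrix.one_apply, h]
    · exact (natDegree_mul_le).trans (by simp)
  calc ∑ i : Fin d, ((1 + (X : ℝ[X]) • (matOf η x).map C) (σ i) i).natDegree
      ≤ ∑ _i : Fin d, 1 := Finset.sum_le_sum (fun i _ => h i)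
    _ = d := by simp


lemma continuous_coeff_prod {α ι : Type*} [TopologicalSpace α] (s : Finset ι)
    (F : ι → α → ℝ[X]) (h : ∀ i ∈ s, ∀ k, Continuous fun x => (F i x).coeff k) :
    ∀ k, Continuous fun x => (∏ i ∈ s, F i x).coeff k := by
  classical
  induction s using Finset.cons_induction with
  | empty => intro k; simp only [Finset.prod_empty, coeff_one]; exact continuous_const
  | cons i s hi ih =>
    intro k
    have h1 := h i (Finset.mem_cons_self i s)
    have h2 := ih (fun j hj k => h j (Finset.mem_cons_of_mem hj) k)
    have e : (fun x => (∏ j ∈ Finset.cons i s hi, F j x).coeff k)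
        = fun x => ∑ p ∈ Finset.HasAntidiagonal.antidiagonal k, (F i x).coeff p.1 * (∏ j ∈ s, F j x).coeff p.2 := by
      funext x
      rw [Finset.prod_cons, coeff_mul]
    rw [e]
    exact continuous_finset_sum _ fun p _ => (h1 p.1).mul (h2 p.2)

lemma continuous_matOf (η : E → E) (hη : ContDiff ℝ (⊤ : ℕ∞) η) (i j : Fin d) :
    Continuous fun x => matOf η x i j := by
  have h1 : Continuous fun x : E => fderiv ℝ η x :=
    hη.continuous_fderiv (by simp)
  have h2 : Continuous fun L : E →L[ℝ] E => L (bE d j) :=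
    (ContinuousLinearMap.apply ℝ (EuclideanSpace ℝ (Fin d)) (bE d j)).continuous
  have h3 : Continuous fun v : E => (bE d).coord i v :=
    ((bE d).coord i).continuous_of_finiteDimensional
  have : (fun x => matOf η x i j)
      = fun x => (bE d).coord i ((fderiv ℝ η x) (bE d j)) := by
    funext x
    simp [matOf, LinearMap.toMatrix_apply, Module.Basis.coord_apply]
  rw [this]
  exact h3.comp (h2.comp h1)

lemma matOf_eq_zero {η : E → E} {x : E} (hx : x ∉ tsupport η) : matOf η x = 0 := by
  have h0 : η =ᶠ[nhds x] 0 := notMem_tsupport_iff_eventuallyEq.1 hx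
  have : fderiv ℝ η x = fderiv ℝ (fun _ => (0 : E)) x := h0.fderiv_eq
  rw [matOf, this, fderiv_fun_const]
  simp

lemma polyOf_eq_one {η : E → E} {x : E} (hx : x ∉ tsupport η) : polyOf η x = 1 := by
  rw [polyOf, matOf_eq_zero hx]
  simp

lemma coeff_polyOf_zero (η : E → E) (x : E) : (polyOf η x).coeff 0 = 1 := by
  rw [coeff_zero_eq_eval_zero, eval_polyOf]
  simp

lemma coeff_polyOf_one (η : E → E) (x : E) : (polyOf η x).coeff 1 = vdiv η x := by
  rw [polyOf, Matrix.coeff_det_one_add_X_smul_one, vdiv,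
    LinearMap.trace_eq_matrix_trace ℝ (bE d)]
  rfl

lemma continuous_coeff_polyOf (η : E → E) (hη : ContDiff ℝ (⊤ : ℕ∞) η) (k : ℕ) :
    Continuous fun x => (polyOf η x).coeff k := by
  classical
  have e : (fun x => (polyOf η x).coeff k)
      = fun x => ∑ σ : Equiv.Perm (Fin d), ((Equiv.Perm.sign σ : ℤ) : ℝ) *
          ((∏ i, (1 + (X : ℝ[X]) • (matOf η x).map C) (σ i) i).coeff k) := by
    funext x
    rw [polyOf, Matrix.det_apply', finset_sum_coeff]
    congr 1
    funext σ
    rw [show (Equiv.Perm.sign σ : ℝ[X]) * _ = ((Equiv.Perm.sign σ : ℤ) : ℝ) •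
        (∏ i, (1 + (X : ℝ[X]) • (matOf η x).map C) (σ i) i) from by
      rw [smul_eq_C_mul]; norm_cast, coeff_smul, smul_eq_mul]
  rw [e]
  refine continuous_finset_sum _ fun σ _ => continuous_const.mul ?_
  refine continuous_coeff_prod Finset.univ
    (fun i x => (1 + (X : ℝ[X]) • (matOf η x).map C) (σ i) i) ?_ k
  intro i _ m
  have e2 : (fun x => ((1 + (X : ℝ[X]) • (matOf η x).map C) (σ i) i).coeff m)
      = fun x => ((1 : Matrix (Fin d) (Fin d) ℝ[X]) (σ i) i).coeff m
          + matOf η x (σ i) i * (X : ℝ[X]).coeff m := by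
    funext x
    rw [Matrix.add_apply, coeff_add, Matrix.smul_apply, Matrix.map_apply, smul_eq_mul,
      show (X : ℝ[X]) * C (matOf η x (σ i) i) = C (matOf η x (σ i) i) * X from
        (commute_X _).eq, coeff_C_mul]
  rw [e2]
  exact continuous_const.add ((continuous_matOf η hη _ _).mul continuous_const)


lemma field_package (Ω : Set E) (hΩm : MeasurableSet Ω) (hfin : volume Ω ≠ ⊤)
    (η : E → E) (hη : ContDiff ℝ (⊤ : ℕ∞) η) (hηc : HasCompactSupport η) :
    ∃ a : ℕ → ℝ, ∃ Cb : ℝ, 0 ≤ Cb ∧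
      a 0 = (volume Ω).toReal ∧
      a 1 = ∫ x in Ω, vdiv η x ∧
      (∀ t : ℝ, ∫ x in Ω, (polyOf η x).eval t = ∑ k ∈ Finset.range (d + 1), a k * t ^ k) ∧
      (∀ t : ℝ, IntegrableOn (fun x => (polyOf η x).eval t) Ω) ∧
      (∀ t : ℝ, |t| ≤ 1 → ∀ x : E, |(polyOf η x).eval t - 1| ≤ Cb * |t|) := by
  classical
  set c : ℕ → E → ℝ := fun k x => (polyOf η x).coeff k with hc_def
  have hc : ∀ k, Continuous (c k) := fun k => continuous_coeff_polyOf η hη k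
  have hc0 : ∀ x, c 0 x = 1 := fun x => coeff_polyOf_zero η x
  have hcs : ∀ k, k ≠ 0 → HasCompactSupport (c k) := by
    intro k hk
    apply HasCompactSupport.intro hηc
    intro x hx
    simp [hc_def, polyOf_eq_one hx, coeff_one, hk]
  have hint : ∀ k, IntegrableOn (c k) Ω := by
    intro k
    rcases Nat.eq_zero_or_pos k with hk | hk
    · subst hk
      have : c 0 = fun _ : E => (1 : ℝ) := funext hc0
      rw [this]
      exact integrableOn_const hfin
    · exact ((hc k).integrable_of_hasCompactSupport (hcs k hk.ne')).integrableOn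
  -- bounds
  have hbd : ∀ k, ∃ b : ℝ, 0 ≤ b ∧ ∀ x, |c k x| ≤ b := by
    intro k
    rcases Nat.eq_zero_or_pos k with hk | hk
    · exact ⟨1, zero_le_one, by subst hk; intro x; rw [hc0 x]; simp⟩
    · obtain ⟨b, hb⟩ := (hcs k hk.ne').exists_bound_of_continuous (hc k)
      exact ⟨max b 0, le_max_right _ _, fun x => (hb x).trans (le_max_left _ _)⟩
  choose B hB0 hB using hbd
  refine ⟨fun k => ∫ x in Ω, c k x, ∑ k ∈ Finset.range (d + 1), B k,
    Finset.sum_nonneg fun k _ => hB0 k, ?_, ?_, ?_, ?_, ?_⟩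
  · show (∫ x in Ω, c 0 x) = (volume Ω).toReal
    have : (fun x : E => c 0 x) = fun _ : E => (1 : ℝ) := funext hc0
    rw [this, setIntegral_const]; simp; rfl
  · show (∫ x in Ω, c 1 x) = ∫ x in Ω, vdiv η x
    refine setIntegral_congr_fun hΩm ?_
    intro x _
    exact coeff_polyOf_one η x
  · intro t
    have hev : ∀ x : E, (polyOf η x).eval t = ∑ k ∈ Finset.range (d + 1), c k x * t ^ k := by
      intro x
      exact eval_eq_sum_range' (Nat.lt_succ_of_le (natDegree_polyOf_le η x)) t
    calc ∫ x in Ω, (polyOf η x).eval t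
        = ∫ x in Ω, ∑ k ∈ Finset.range (d + 1), c k x * t ^ k :=
          by refine setIntegral_congr_fun hΩm fun x _ => hev x
      _ = ∑ k ∈ Finset.range (d + 1), ∫ x in Ω, c k x * t ^ k :=
          integral_finset_sum _ (fun k _ => (hint k).mul_const _)
      _ = ∑ k ∈ Finset.range (d + 1), (∫ x in Ω, c k x) * t ^ k := by
          refine Finset.sum_congr rfl fun k _ => integral_mul_const _ _
  · intro t
    have hev : (fun x : E => (polyOf η x).eval t)
        = fun x => ∑ k ∈ Finset.range (d + 1), c k x * t ^ k := by
      funext x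
      exact eval_eq_sum_range' (Nat.lt_succ_of_le (natDegree_polyOf_le η x)) t
    rw [hev]
    exact integrable_finset_sum _ (fun k _ => (hint k).mul_const _)
  · intro t ht x
    have hev : (polyOf η x).eval t = ∑ k ∈ Finset.range (d + 1), c k x * t ^ k :=
      eval_eq_sum_range' (Nat.lt_succ_of_le (natDegree_polyOf_le η x)) t
    have hsplit : (polyOf η x).eval t - 1 = ∑ k ∈ Finset.Ico 1 (d + 1), c k x * t ^ k := by
      rw [hev, Finset.range_eq_Ico, Finset.sum_eq_sum_Ico_succ_bot (Nat.succ_pos d), hc0 x]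
      rw [Nat.succ_eq_add_one]
      ring
    rw [hsplit]
    calc |∑ k ∈ Finset.Ico 1 (d + 1), c k x * t ^ k|
        ≤ ∑ k ∈ Finset.Ico 1 (d + 1), |c k x * t ^ k| := Finset.abs_sum_le_sum_abs _ _
      _ ≤ ∑ k ∈ Finset.Ico 1 (d + 1), B k * |t| := by
          refine Finset.sum_le_sum fun k hk => ?_
          rw [abs_mul, abs_pow]
          have h1 : |c k x| ≤ B k := hB k x
          have h2 : |t| ^ k ≤ |t| :=
            pow_le_of_le_one (abs_nonneg t) ht
              (by rcases Finset.mem_Ico.1 hk with ⟨h1k, _⟩; omega)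
          exact mul_le_mul h1 h2 (pow_nonneg (abs_nonneg t) k) (hB0 k)
      _ ≤ ∑ k ∈ Finset.range (d + 1), B k * |t| := by
          refine Finset.sum_le_sum_of_subset_of_nonneg ?_
            (fun k _ _ => mul_nonneg (hB0 k) (abs_nonneg t))
          rw [Finset.range_eq_Ico]
          exact Finset.Ico_subset_Ico (Nat.zero_le 1) le_rfl
      _ = (∑ k ∈ Finset.range (d + 1), B k) * |t| := (Finset.sum_mul _ _ _).symm


lemma hasDerivAt_polysum (n : ℕ) (hn : 1 < n) (a : ℕ → ℝ) :
    HasDerivAt (fun t : ℝ => ∑ k ∈ Finset.range n, a k * t ^ k) (a 1) 0 := by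
  have h := HasDerivAt.fun_sum
    (fun k (_ : k ∈ Finset.range n) => (hasDerivAt_pow k (0 : ℝ)).const_mul (a k))
  have e : (∑ k ∈ Finset.range n, a k * ((k : ℝ) * (0 : ℝ) ^ (k - 1))) = a 1 := by
    rw [Finset.sum_eq_single_of_mem 1 (Finset.mem_range.2 hn)]
    · simp
    · intro k _ hk
      rcases Nat.eq_zero_or_pos k with h0 | h0
      · simp [h0]
      · have hk1 : k - 1 ≠ 0 := by omega
        simp [zero_pow hk1]
  exact e ▸ h

lemma volume_image_eq (Ω : Set E) (hΩo : IsOpen Ω) (hfin : volume Ω ≠ ⊤)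
    (η ξ : E → E) (hηd : Differentiable ℝ η) (hξd : Differentiable ℝ ξ)
    (hdisj : Disjoint (tsupport η) (tsupport ξ))
    (t s : ℝ) (Lη Lξ : NNReal) (hLη : LipschitzWith Lη η) (hLξ : LipschitzWith Lξ ξ)
    (hlip : (Lη : ℝ) * |t| + (Lξ : ℝ) * |s| < 1)
    (Cη Cξ : ℝ)
    (hBη : ∀ x : E, |(polyOf η x).eval t - 1| ≤ Cη * |t|)
    (hBξ : ∀ x : E, |(polyOf ξ x).eval s - 1| ≤ Cξ * |s|)
    (hpos : Cη * |t| + Cξ * |s| < 1)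
    (hIη : IntegrableOn (fun x => (polyOf η x).eval t) Ω)
    (hIξ : IntegrableOn (fun x => (polyOf ξ x).eval s) Ω) :
    volume ((fun x => x + t • η x + s • ξ x) '' Ω)
      = ENNReal.ofReal ((∫ x in Ω, (polyOf η x).eval t)
          + (∫ x in Ω, (polyOf ξ x).eval s) - (volume Ω).toReal) := by
  classical
  set Φ : E → E := fun x => x + t • η x + s • ξ x with hΦdef
  set DΦ : E → (E →L[ℝ] E) := fun x =>
    ContinuousLinearMap.id ℝ (EuclideanSpace ℝ (Fin d)) + t • fderiv ℝ η x + s • fderiv ℝ ξ x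
    with hDΦdef
  set ρ : E → ℝ := fun x => (polyOf η x).eval t + (polyOf ξ x).eval s - 1 with hρdef
  have hDΦ : ∀ x, HasFDerivAt Φ (DΦ x) x := fun x =>
    ((hasFDerivAt_id x).add ((hηd x).hasFDerivAt.const_smul t)).add
      ((hξd x).hasFDerivAt.const_smul s)
  have hdetρ : ∀ x, (DΦ x).det = ρ x := by
    intro x
    have hmat : (DΦ x).det = Matrix.det (1 + t • matOf η x + s • matOf ξ x) := by
      show LinearMap.det ((DΦ x) : E →ₗ[ℝ] E) = _
      rw [← LinearMap.det_toMatrix (bE d)]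
      congr 1
      simp only [hDΦdef, ContinuousLinearMap.coe_add, ContinuousLinearMap.coe_smul,
        ContinuousLinearMap.coe_id, map_add, _root_.map_smul, LinearMap.toMatrix_id, matOf]
    by_cases hxη : x ∈ tsupport η
    · have hxξ : x ∉ tsupport ξ := Set.disjoint_left.1 hdisj hxη
      rw [hmat, matOf_eq_zero hxξ, hρdef]
      simp only [eval_polyOf, matOf_eq_zero hxξ, smul_zero, add_zero]
      simp
    · rw [hmat, matOf_eq_zero hxη, hρdef]
      simp only [eval_polyOf, matOf_eq_zero hxη, smul_zero, add_zero]
      simp only [Matrix.det_one]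
      ring
  have hρpos : ∀ x, 0 < ρ x := by
    intro x
    have b1 := abs_le.1 (hBη x)
    have b2 := abs_le.1 (hBξ x)
    rw [hρdef]
    simp only
    linarith [b1.1, b2.1]
  have hinj : Set.InjOn Φ Ω := by
    intro x _ y _ hxy
    by_contra hne'
    have hd0 : (0 : ℝ) < ‖x - y‖ := by
      rw [norm_pos_iff]
      exact sub_ne_zero.2 hne'
    have h' : (x + t • η x + s • ξ x) - (y + t • η y + s • ξ y) = 0 := sub_eq_zero_of_eq hxy
    have key : x - y = (t • η y - t • η x) + (s • ξ y - s • ξ x) := by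
      rw [← sub_eq_zero]
      have e : (x - y) - ((t • η y - t • η x) + (s • ξ y - s • ξ x))
          = (x + t • η x + s • ξ x) - (y + t • η y + s • ξ y) := by abel
      rw [e, h']
    have hb : ‖x - y‖ ≤ ((Lη : ℝ) * |t| + (Lξ : ℝ) * |s|) * ‖x - y‖ := by
      nth_rewrite 1 [key]
      have l1 : ‖η y - η x‖ ≤ (Lη : ℝ) * ‖y - x‖ := by
        have := hLη.dist_le_mul y x
        rwa [dist_eq_norm, dist_eq_norm] at this
      have l2 : ‖ξ y - ξ x‖ ≤ (Lξ : ℝ) * ‖y - x‖ := by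
        have := hLξ.dist_le_mul y x
        rwa [dist_eq_norm, dist_eq_norm] at this
      calc ‖(t • η y - t • η x) + (s • ξ y - s • ξ x)‖
          ≤ ‖t • η y - t • η x‖ + ‖s • ξ y - s • ξ x‖ := norm_add_le _ _
        _ = |t| * ‖η y - η x‖ + |s| * ‖ξ y - ξ x‖ := by
            rw [← smul_sub, ← smul_sub, norm_smul, norm_smul, Real.norm_eq_abs, Real.norm_eq_abs]
        _ ≤ |t| * ((Lη : ℝ) * ‖y - x‖) + |s| * ((Lξ : ℝ) * ‖y - x‖) :=
            add_le_add (mul_le_mul_of_nonneg_left l1 (abs_nonneg t))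
              (mul_le_mul_of_nonneg_left l2 (abs_nonneg s))
        _ = ((Lη : ℝ) * |t| + (Lξ : ℝ) * |s|) * ‖y - x‖ := by ring
        _ = ((Lη : ℝ) * |t| + (Lξ : ℝ) * |s|) * ‖x - y‖ := by rw [norm_sub_rev]
    have := mul_lt_mul_of_pos_right hlip hd0
    linarith
  have himg := lintegral_abs_det_fderiv_eq_addHaar_image volume hΩo.measurableSet
    (fun x _ => (hDΦ x).hasFDerivWithinAt) hinj
  rw [show ((fun x => x + t • η x + s • ξ x) '' Ω) = Φ '' Ω from rfl, ← himg]
  have hcongr : ∀ x, ENNReal.ofReal |(DΦ x).det| = ENNReal.ofReal (ρ x) := fun x => by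
    rw [hdetρ x, abs_of_pos (hρpos x)]
  rw [lintegral_congr hcongr]
  have hρint : IntegrableOn ρ Ω := by
    apply Integrable.sub (hIη.add hIξ)
    exact integrableOn_const hfin
  have hρnn : 0 ≤ᵐ[volume.restrict Ω] ρ := Filter.Eventually.of_forall fun x => (hρpos x).le
  rw [← ofReal_integral_eq_lintegral_ofReal hρint hρnn]
  congr 1
  have h1 : ∫ x in Ω, ρ x = (∫ x in Ω, ((polyOf η x).eval t + (polyOf ξ x).eval s))
      - ∫ _x in Ω, (1 : ℝ) :=
    integral_sub (hIη.add hIξ) (integrableOn_const hfin)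
  rw [h1, integral_add hIη hIξ, setIntegral_const]
  simp
  rfl

end AuxVP

theorem stmt_7 {d : ℕ} (D Ω : Set (EuclideanSpace ℝ (Fin d)))
    (hD : IsOpen D) (hDb : Bornology.IsBounded D)
    (hΩ : IsOpen Ω) (hΩD : Ω ⊆ D)
    (η ξ : EuclideanSpace ℝ (Fin d) → EuclideanSpace ℝ (Fin d))
    (hη : ContDiff ℝ (⊤ : ℕ∞) η) (hηc : HasCompactSupport η) (hηD : tsupport η ⊆ D)
    (hξ : ContDiff ℝ (⊤ : ℕ∞) ξ) (hξc : HasCompactSupport ξ) (hξD : tsupport ξ ⊆ D)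
    (hdisj : Disjoint (tsupport η) (tsupport ξ))
    (hne : (∫ x in Ω, vdiv ξ x) ≠ 0) :
    ∃ t₀ > (0 : ℝ), ∃ f : ℝ → ℝ,
      ContDiffOn ℝ (⊤ : ℕ∞) f (Set.Ioo (-t₀) t₀) ∧
      f 0 = 0 ∧
      (∀ t : ℝ, |t| < t₀ →
        volume ((fun x => x + t • η x + f t • ξ x) '' Ω) = volume Ω) ∧
      deriv f 0 * (∫ x in Ω, vdiv ξ x) = -(∫ x in Ω, vdiv η x) := by
  classical
  -- dimension zero is impossible
  rcases Nat.eq_zero_or_pos d with hd0 | hd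
  · exfalso
    apply hne
    have hz : ∀ x, vdiv ξ x = 0 := by
      intro x
      rw [vdiv, LinearMap.trace_eq_matrix_trace ℝ (bE d)]
      subst hd0
      simp [Matrix.trace]
    simp [hz]
  have hΩfin : volume Ω ≠ ⊤ := by
    have hb : Bornology.IsBounded Ω := hDb.subset hΩD
    exact hb.measure_lt_top.ne
  obtain ⟨aη, Cη, hCη0, haη0, haη1, hGint, hIη, hBη⟩ :=
    field_package Ω hΩ.measurableSet hΩfin η hη hηc
  obtain ⟨aξ, Cξ, hCξ0, haξ0, haξ1, hHint, hIξ, hBξ⟩ :=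
    field_package Ω hΩ.measurableSet hΩfin ξ hξ hξc
  set V : ℝ := (volume Ω).toReal with hV
  set G : ℝ → ℝ := fun u => ∑ k ∈ Finset.range (d + 1), aη k * u ^ k with hGdef
  set H : ℝ → ℝ := fun u => ∑ k ∈ Finset.range (d + 1), aξ k * u ^ k with hHdef
  have hsum0 : ∀ a : ℕ → ℝ, ∑ k ∈ Finset.range (d + 1), a k * (0 : ℝ) ^ k = a 0 := by
    intro a
    rw [Finset.sum_eq_single_of_mem 0 (Finset.mem_range.2 (Nat.succ_pos d))]
    · simp
    · intro k _ hk
      simp [zero_pow hk]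
  have hG0 : G 0 = V := by rw [hGdef]; simpa using (hsum0 aη).trans haη0
  have hH0 : H 0 = V := by rw [hHdef]; simpa using (hsum0 aξ).trans haξ0
  have hGc : ContDiff ℝ (⊤ : WithTop ℕ∞) G :=
    ContDiff.sum fun k _ => contDiff_const.mul (contDiff_id.pow k)
  have hHc : ContDiff ℝ (⊤ : WithTop ℕ∞) H :=
    ContDiff.sum fun k _ => contDiff_const.mul (contDiff_id.pow k)
  have hGd : HasDerivAt G (aη 1) 0 := hasDerivAt_polysum (d + 1) (by omega) aη
  have hHd : HasDerivAt H (aξ 1) 0 := hasDerivAt_polysum (d + 1) (by omega) aξ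
  set c : ℝ := ∫ x in Ω, vdiv ξ x with hc
  have hHdc : HasDerivAt H c 0 := by rw [← haξ1]; exact hHd
  set e : ℝ ≃L[ℝ] ℝ := ContinuousLinearEquiv.unitsEquivAut ℝ (Units.mk0 c hne) with hedef
  have hHder : HasFDerivAt H (e : ℝ →L[ℝ] ℝ) 0 := by
    have h2 : (e : ℝ →L[ℝ] ℝ) = ContinuousLinearMap.smulRight (1 : ℝ →L[ℝ] ℝ) c := by
      ext
      simp [hedef, ContinuousLinearEquiv.unitsEquivAut, mul_comm]
    rw [h2]
    exact hHdc.hasFDerivAt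
  have hn1 : (⊤ : WithTop ℕ∞) ≠ 0 := by simp
  have hHcd : ContDiffAt ℝ (⊤ : WithTop ℕ∞) H 0 := hHc.contDiffAt
  set Hinv : ℝ → ℝ := hHcd.localInverse hHder hn1 with hHinvdef
  have hinv0 : Hinv (H 0) = 0 := hHcd.localInverse_apply_image hHder hn1
  have hinvcd : ContDiffAt ℝ (⊤ : WithTop ℕ∞) Hinv (H 0) := hHcd.to_localInverse hHder hn1
  have hrinv : ∀ᶠ y in nhds (H 0), H (Hinv y) = y :=
    (hHcd.hasStrictFDerivAt' hHder hn1).eventually_right_inverse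
  set f : ℝ → ℝ := fun u => Hinv (2 * V - G u) with hfdef
  have harg : 2 * V - G 0 = H 0 := by rw [hG0, hH0]; ring
  have hf0 : f 0 = 0 := by
    rw [hfdef]
    simp only
    rw [harg, hinv0]
  have hargc : ContDiffAt ℝ (⊤ : WithTop ℕ∞) (fun u => 2 * V - G u) 0 :=
    (contDiff_const.sub hGc).contDiffAt
  have hfcd : ContDiffAt ℝ (⊤ : WithTop ℕ∞) f 0 := by
    have h2 : ContDiffAt ℝ (⊤ : WithTop ℕ∞) Hinv (2 * V - G 0) := by rw [harg]; exact hinvcd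
    exact h2.comp 0 hargc
  have hright : ∀ᶠ u in nhds 0, H (f u) = 2 * V - G u := by
    have htends : Filter.Tendsto (fun u => 2 * V - G u) (nhds 0) (nhds (H 0)) := by
      rw [← harg]
      exact hargc.continuousAt
    exact htends.eventually hrinv
  obtain ⟨Lη, hLη⟩ := hη.lipschitzWith_of_hasCompactSupport hηc (by simp)
  obtain ⟨Lξ, hLξ⟩ := hξ.lipschitzWith_of_hasCompactSupport hξc (by simp)
  have hfc0 : ContinuousAt f 0 := hfcd.continuousAt
  -- smallness
  set W : ℝ → ℝ := fun u => (Cη + (Lη : ℝ) + 1) * |u| + (Cξ + (Lξ : ℝ) + 1) * |f u| with hWdef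
  have hWt : Filter.Tendsto W (nhds 0) (nhds 0) := by
    have l1 : Filter.Tendsto (fun u : ℝ => |u|) (nhds 0) (nhds 0) := by
      simpa using (continuous_abs.tendsto (0 : ℝ))
    have l2 : Filter.Tendsto (fun u : ℝ => |f u|) (nhds 0) (nhds 0) := by
      have := hfc0.tendsto
      rw [hf0] at this
      simpa using this.abs
    have := (l1.const_mul (Cη + (Lη : ℝ) + 1)).add (l2.const_mul (Cξ + (Lξ : ℝ) + 1))
    simpa using this
  have hWlt : ∀ᶠ u in nhds 0, W u < 1 := hWt.eventually_lt_const one_pos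
  obtain ⟨u_set, hu_nhds, hu_cd⟩ :=
    hfcd.contDiffOn (m := ((⊤ : ℕ∞) : WithTop ℕ∞)) le_top (fun _ => rfl)
  have hu' : ∀ᶠ u in nhds 0, u ∈ u_set := Filter.eventually_of_mem hu_nhds fun _ h => h
  have hall := hright.and (hWlt.and hu')
  obtain ⟨ε, hε0, hball⟩ := Metric.eventually_nhds_iff.1 hall
  have hP : ∀ t : ℝ, |t| < ε →
      (H (f t) = 2 * V - G t ∧ W t < 1 ∧ t ∈ u_set) := by
    intro t ht
    exact hball (by rw [Real.dist_eq, sub_zero]; exact ht)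
  refine ⟨ε, hε0, f, ?_, hf0, ?_, ?_⟩
  · apply hu_cd.mono
    intro t ht
    exact (hP t (abs_lt.2 ⟨ht.1, ht.2⟩)).2.2
  · -- volume preservation
    intro t ht
    obtain ⟨hPt1, hPt2, _⟩ := hP t ht
    set s := f t with hs
    have hLnn : (0 : ℝ) ≤ (Lη : ℝ) := Lη.coe_nonneg
    have hLnn' : (0 : ℝ) ≤ (Lξ : ℝ) := Lξ.coe_nonneg
    have habs : (0 : ℝ) ≤ |t| := abs_nonneg t
    have habs' : (0 : ℝ) ≤ |s| := abs_nonneg s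
    have e1 : (Lη : ℝ) * |t| ≤ (Cη + (Lη : ℝ) + 1) * |t| :=
      mul_le_mul_of_nonneg_right (by linarith) habs
    have e2 : (Lξ : ℝ) * |s| ≤ (Cξ + (Lξ : ℝ) + 1) * |s| :=
      mul_le_mul_of_nonneg_right (by linarith) habs'
    have e3 : Cη * |t| ≤ (Cη + (Lη : ℝ) + 1) * |t| :=
      mul_le_mul_of_nonneg_right (by linarith) habs
    have e4 : Cξ * |s| ≤ (Cξ + (Lξ : ℝ) + 1) * |s| :=
      mul_le_mul_of_nonneg_right (by linarith) habs'
    have e5 : |t| ≤ (Cη + (Lη : ℝ) + 1) * |t| := le_mul_of_one_le_left habs (by linarith)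
    have e6 : |s| ≤ (Cξ + (Lξ : ℝ) + 1) * |s| := le_mul_of_one_le_left habs' (by linarith)
    have hW1 : (Cη + (Lη : ℝ) + 1) * |t| + (Cξ + (Lξ : ℝ) + 1) * |s| < 1 := hPt2
    have hveq := volume_image_eq Ω hΩ hΩfin η ξ
      (hη.differentiable (by simp)) (hξ.differentiable (by simp))
      hdisj t s Lη Lξ hLη hLξ (by linarith) Cη Cξ
      (fun x => hBη t (by linarith) x) (fun x => hBξ s (by linarith) x)
      (by linarith) (hIη t) (hIξ s)
    rw [hveq, hGint t, hHint s]
    have hHfs : (∑ k ∈ Finset.range (d + 1), aξ k * s ^ k) = 2 * V - G t := hPt1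
    rw [hHfs]
    have : (∑ k ∈ Finset.range (d + 1), aη k * t ^ k) + (2 * V - G t) - V = V := by
      rw [hGdef]
      ring
    rw [this, hV]
    exact ENNReal.ofReal_toReal hΩfin
  · -- derivative identity
    have hfd : DifferentiableAt ℝ f 0 :=
      hfcd.differentiableAt (by simp)
    have h1 : HasDerivAt (fun u => H (f u)) (c * deriv f 0) 0 := by
      have hH' : HasDerivAt H c (f 0) := by rw [hf0]; exact hHdc
      exact hH'.comp 0 hfd.hasDerivAt
    have h2 : HasDerivAt (fun u => 2 * V - G u) (-(aη 1)) 0 := by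
      simpa using (hasDerivAt_const (0 : ℝ) (2 * V)).fun_sub hGd
    have h3 : HasDerivAt (fun u => H (f u)) (-(aη 1)) 0 :=
      h2.congr_of_eventuallyEq hright
    have h4 : c * deriv f 0 = -(aη 1) := h1.unique h3
    rw [haη1] at h4
    rw [mul_comm]
    exact h4
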